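/- Let R be a Noetherian local ring with maximal ideal 𝔪_R and residue field k = R/𝔪_R, let C• be a good complex of R-modules, and let f : F• → C• be a quasi-isomorphism where F• is a minimal complex. Then for each i ∈ ℤ there is an isomorphism F^i ⊗_R k ≅ H^i(C• ⊗_R k). In particular, F^i ≠ 0 if and only if H^i(C• ⊗_R k) ≠ 0. -/

import Mathlib

open CategoryTheory Limits


open CategoryTheory

section QuotientMachinery

variable (R : Type) [CommRing R]

/-- The functor `M ↦ M/IM` on `R`-modules (i.e. `- ⊗_R R/I`). -/
noncomputable def qMod (I : Ideal R) : ModuleCat R ⥤ ModuleCat R where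
  obj M := ModuleCat.of R (M ⧸ (I • (⊤ : Submodule R M)))
  map {M N} f := ModuleCat.ofHom
    (Submodule.mapQ _ _ f.hom (Submodule.smul_top_le_comap_smul_top I f.hom))
  map_id M := by
    exact ModuleCat.hom_ext (Submodule.linearMap_qext _ (LinearMap.ext fun y => rfl))
  map_comp {M N P} f g := by
    exact ModuleCat.hom_ext (Submodule.linearMap_qext _ (LinearMap.ext fun y => rfl))

instance (I : Ideal R) : (qMod R I).Additive := by
  constructor
  intro M N f g
  exact ModuleCat.hom_ext (Submodule.linearMap_qext _ (LinearMap.ext fun y => rfl))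

/-- Reduction of a cochain complex of `R`-modules modulo an ideal `I`,
i.e. the complex `C ⊗_R R/I`. -/
noncomputable def qCx (I : Ideal R) :
    CochainComplex (ModuleCat R) ℤ ⥤ CochainComplex (ModuleCat R) ℤ :=
  (qMod R I).mapHomologicalComplex _

/-- The natural reduction map `M ⟶ M/IM`. -/
noncomputable def qPi (I : Ideal R) : 𝟭 (ModuleCat R) ⟶ qMod R I where
  app M := ModuleCat.ofHom (Submodule.mkQ _ : M →ₗ[R] _)
  naturality M N f := by
    ext x
    rfl

/-- The natural reduction chain map `C ⟶ C ⊗_R R/I`. -/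
noncomputable def qRed (I : Ideal R) (C : CochainComplex (ModuleCat R) ℤ) :
    C ⟶ (qCx R I).obj C :=
  (NatTrans.mapHomologicalComplex (qPi R I) (ComplexShape.up ℤ)).app C

end QuotientMachinery

/-- A good complex of `R`-modules: a bounded cochain complex of finitely generated
projective `R`-modules. -/
def IsGoodComplex (R : Type) [CommRing R] (C : CochainComplex (ModuleCat R) ℤ) : Prop :=
  (∃ a b : ℤ, ∀ i : ℤ, (i < a ∨ b < i) → Limits.IsZero (C.X i)) ∧
  (∀ i : ℤ, Module.Finite R (C.X i)) ∧ (∀ i : ℤ, Module.Projective R (C.X i))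

/-- A minimal complex: a good complex all of whose differentials vanish after reduction
modulo the maximal ideal, i.e. all differentials of `C ⊗_R R/𝔪_R` are zero. -/
def IsMinimalComplex (R : Type) [CommRing R] [IsLocalRing R]
    (C : CochainComplex (ModuleCat R) ℤ) : Prop :=
  IsGoodComplex R C ∧
  ∀ i j : ℤ, ((qCx R (IsLocalRing.maximalIdeal R)).obj C).d i j = 0


namespace ContractionHelper

variable {R : Type} [CommRing R] (D : CochainComplex (ModuleCat R) ℤ)

/-- The contraction relation in degree `n`. -/
def CRel (n : ℤ) (p : (D.X n ⟶ D.X (n-1)) × (D.X (n+1) ⟶ D.X n)) : Prop :=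
  D.d n (n+1) ≫ p.2 + p.1 ≫ D.d (n-1) n = 𝟙 (D.X n)

/-- One step of the construction of a contracting homotopy. -/
noncomputable def step (hproj : ∀ n : ℤ, Module.Projective R (D.X n))
    (hex : ∀ n : ℤ, D.ExactAt n) (n : ℤ)
    (p : {q : (D.X (n+1) ⟶ D.X (n+1-1)) × (D.X (n+1+1) ⟶ D.X (n+1)) // CRel D (n+1) q}) :
    {q : (D.X n ⟶ D.X (n-1)) × (D.X (n+1) ⟶ D.X n) // CRel D n q ∧
      q.2 = p.1.1 ≫ (D.XIsoOfEq (show n+1-1 = n by omega)).hom} := by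
  classical
  set σ' : D.X (n+1) ⟶ D.X n := p.1.1 ≫ (D.XIsoOfEq (show n+1-1 = n by omega)).hom with hσ'
  set τ : D.X n ⟶ D.X n := 𝟙 (D.X n) - D.d n (n+1) ≫ σ' with hτdef
  have hrel := p.2
  rw [CRel] at hrel
  have hτ : τ ≫ D.d n (n+1) = 0 := by
    have h1 : σ' ≫ D.d n (n+1) = p.1.1 ≫ D.d (n+1-1) (n+1) := by
      rw [hσ', Category.assoc, D.XIsoOfEq_hom_comp_d]
    have h2 : p.1.1 ≫ D.d (n+1-1) (n+1) = 𝟙 (D.X (n+1)) - D.d (n+1) (n+1+1) ≫ p.1.2 := by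
      rw [← hrel]; abel
    rw [hτdef, Preadditive.sub_comp, Category.id_comp, Category.assoc, h1, h2,
      Preadditive.comp_sub, Category.comp_id, ← Category.assoc, D.d_comp_d, Limits.zero_comp,
      sub_sub_cancel]
  -- exactness at n
  have hexn := (D.exactAt_iff' (n-1) n (n+1) (by simp) (by simp)).mp (hex n)
  rw [ShortComplex.moduleCat_exact_iff] at hexn
  -- the kernel of d : X n ⟶ X (n+1)
  set K : Submodule R (D.X n) := LinearMap.ker (D.d n (n+1)).hom with hK
  have hdd : ∀ x : D.X (n-1), (D.d (n-1) n).hom x ∈ K := by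
    intro x
    simp only [hK, LinearMap.mem_ker]
    have h0 : D.d (n-1) n ≫ D.d n (n+1) = 0 := D.d_comp_d _ _ _
    exact LinearMap.congr_fun (congrArg ModuleCat.Hom.hom h0) x
  set gbar : D.X (n-1) →ₗ[R] K := LinearMap.codRestrict K (D.d (n-1) n).hom hdd with hgbar
  have hgsurj : Function.Surjective gbar := by
    rintro ⟨x, hx⟩
    obtain ⟨y, hy⟩ := hexn x hx
    exact ⟨y, Subtype.ext hy⟩
  have hτK : ∀ x : D.X n, τ.hom x ∈ K := by
    intro x
    simp only [hK, LinearMap.mem_ker]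
    exact LinearMap.congr_fun (congrArg ModuleCat.Hom.hom hτ) x
  set τbar : D.X n →ₗ[R] K := LinearMap.codRestrict K τ.hom hτK with hτbar
  have := hproj n
  have hlift := Module.projective_lifting_property gbar τbar hgsurj
  set l := hlift.choose with hldef
  have hl : gbar ∘ₗ l = τbar := hlift.choose_spec
  have hlτ : (ModuleCat.ofHom l : D.X n ⟶ D.X (n-1)) ≫ D.d (n-1) n = τ := by
    ext x
    have h1 : gbar (l x) = τbar x := LinearMap.congr_fun hl x
    exact congrArg (Subtype.val) h1
  refine ⟨(ModuleCat.ofHom l, σ'), ?_, rfl⟩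
  rw [CRel]
  dsimp only
  rw [hlτ, hτdef]
  abel


/-- Recursive construction of a contracting homotopy for a bounded-above acyclic
complex of projectives. -/
noncomputable def contractAux (b : ℤ) (hb : ∀ n : ℤ, b < n → Limits.IsZero (D.X n))
    (hproj : ∀ n : ℤ, Module.Projective R (D.X n)) (hex : ∀ n : ℤ, D.ExactAt n) :
    ∀ n : ℤ, {q : (D.X n ⟶ D.X (n-1)) × (D.X (n+1) ⟶ D.X n) // CRel D n q} := fun n =>
  if h : b < n then
    ⟨(0, 0), by
      rw [CRel]
      have h1 : 𝟙 (D.X n) = 0 := (hb n h).eq_of_src _ _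
      simp [h1]⟩
  else
    ⟨(step D hproj hex n (contractAux b hb hproj hex (n+1))).1,
     (step D hproj hex n (contractAux b hb hproj hex (n+1))).2.1⟩
termination_by n => (b + 1 - n).toNat
decreasing_by
  have : ¬ b < n := h
  omega

lemma contractAux_coherence (b : ℤ) (hb : ∀ n : ℤ, b < n → Limits.IsZero (D.X n))
    (hproj : ∀ n : ℤ, Module.Projective R (D.X n)) (hex : ∀ n : ℤ, D.ExactAt n) (n : ℤ) :
    (contractAux D b hb hproj hex n).1.2 =
      (contractAux D b hb hproj hex (n+1)).1.1 ≫
        (D.XIsoOfEq (show n+1-1 = n by omega)).hom := by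
  rw [contractAux]
  split
  · next h =>
      exact (hb (n+1) (by omega)).eq_of_src _ _
  · exact (step D hproj hex n (contractAux D b hb hproj hex (n+1))).2.2

/-- A bounded-above acyclic complex of projective modules is contractible. -/
noncomputable def contraction (b : ℤ) (hb : ∀ n : ℤ, b < n → Limits.IsZero (D.X n))
    (hproj : ∀ n : ℤ, Module.Projective R (D.X n)) (hex : ∀ n : ℤ, D.ExactAt n) :
    Homotopy (𝟙 D) 0 where
  hom i j :=
    if hij : j + 1 = i then
      (contractAux D b hb hproj hex i).1.1 ≫ (D.XIsoOfEq (show i - 1 = j by omega)).hom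
    else 0
  zero i j hij := dif_neg hij
  comm i := by
    have hrel := (contractAux D b hb hproj hex i).2
    rw [CRel] at hrel
    have hcoh := contractAux_coherence D b hb hproj hex i
    rw [dNext_eq _ (show (ComplexShape.up ℤ).Rel i (i+1) by simp),
        prevD_eq _ (show (ComplexShape.up ℤ).Rel (i-1) i by simp)]
    have h1 : (if hij : i + 1 = i + 1 then
        (contractAux D b hb hproj hex (i+1)).1.1 ≫
          (D.XIsoOfEq (show i + 1 - 1 = i by omega)).hom else 0) =
        (contractAux D b hb hproj hex i).1.2 := by
      rw [dif_pos rfl, ← hcoh]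
    have h2 : (if hij : (i - 1) + 1 = i then
        (contractAux D b hb hproj hex i).1.1 ≫
          (D.XIsoOfEq (show i - 1 = i - 1 by omega)).hom else 0) =
        (contractAux D b hb hproj hex i).1.1 := by
      rw [dif_pos (by omega)]
      simp [HomologicalComplex.XIsoOfEq]
    rw [h1, h2]
    simp only [HomologicalComplex.id_f, HomologicalComplex.zero_f, add_zero]
    rw [← hrel]

open HomotopyCategory CochainComplex in
/-- A quasi-isomorphism whose mapping cone is bounded above and degreewise projective
is a homotopy equivalence. -/
noncomputable def homotopyEquivOfQuasiIso {F C : CochainComplex (ModuleCat R) ℤ}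
    (f : F ⟶ C) [QuasiIso f] (b : ℤ)
    (hb : ∀ n : ℤ, b < n → Limits.IsZero ((mappingCone f).X n))
    (hproj : ∀ n : ℤ, Module.Projective R ((mappingCone f).X n)) :
    HomotopyEquiv F C := by
  have hq : (HomotopyCategory.quasiIso (ModuleCat R) (ComplexShape.up ℤ))
      ((HomotopyCategory.quotient _ _).map f) := by
    rw [HomotopyCategory.quotient_map_mem_quasiIso_iff, HomologicalComplex.mem_quasiIso_iff]
    infer_instance
  rw [HomotopyCategory.quasiIso_eq_subcategoryAcyclic_W] at hq
  have hP := ((HomotopyCategory.subcategoryAcyclic (ModuleCat R)).trW_iff_of_distinguished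
    (mappingCone.triangleh f)
    (HomotopyCategory.mappingCone_triangleh_distinguished f)).mp hq
  have hP' : (HomotopyCategory.subcategoryAcyclic (ModuleCat R))
      ((HomotopyCategory.quotient (ModuleCat R) (ComplexShape.up ℤ)).obj (mappingCone f)) := hP
  have hex : ∀ n : ℤ, (mappingCone f).ExactAt n := by
    rwa [HomotopyCategory.quotient_obj_mem_subcategoryAcyclic_iff_exactAt] at hP'
  have h0 : Homotopy (𝟙 (mappingCone f)) 0 := contraction _ b hb hproj hex
  have hzero : Limits.IsZero ((HomotopyCategory.quotient (ModuleCat R)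
      (ComplexShape.up ℤ)).obj (mappingCone f)) := by
    rw [Limits.IsZero.iff_id_eq_zero]
    have := HomotopyCategory.eq_of_homotopy _ _ h0
    rw [CategoryTheory.Functor.map_id, Functor.map_zero] at this
    exact this
  have : IsIso ((HomotopyCategory.quotient (ModuleCat R) (ComplexShape.up ℤ)).map f) :=
    (Pretriangulated.Triangle.isZero₃_iff_isIso₁ (mappingCone.triangleh f)
      (HomotopyCategory.mappingCone_triangleh_distinguished f)).mp hzero
  exact HomotopyCategory.homotopyEquivOfIso
    (asIso ((HomotopyCategory.quotient (ModuleCat R) (ComplexShape.up ℤ)).map f))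

end ContractionHelper

section MainProof

open ContractionHelper HomologicalComplex

variable {R : Type} [CommRing R]

lemma isZero_iff_subsingleton' (M : ModuleCat R) : Limits.IsZero M ↔ Subsingleton M := by
  constructor
  · intro h
    have hid : 𝟙 M = 0 := (Limits.IsZero.iff_id_eq_zero M).mp h
    refine subsingleton_of_forall_eq 0 (fun x => ?_)
    have := LinearMap.congr_fun (congrArg ModuleCat.Hom.hom hid) x
    simpa using this
  · intro h
    exact ModuleCat.isZero_of_subsingleton M

lemma isZero_qMod_iff [IsLocalRing R] (M : ModuleCat R) [Module.Finite R M] :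
    Limits.IsZero ((qMod R (IsLocalRing.maximalIdeal R)).obj M) ↔ Limits.IsZero M := by
  rw [isZero_iff_subsingleton', isZero_iff_subsingleton']
  constructor
  · intro h
    have heq : IsLocalRing.maximalIdeal R • (⊤ : Submodule R M) = ⊤ :=
      (Submodule.Quotient.subsingleton_iff (p := IsLocalRing.maximalIdeal R • (⊤ : Submodule R M))).mp h
    have hbot : (⊤ : Submodule R M) = ⊥ :=
      Submodule.eq_bot_of_le_smul_of_le_jacobson_bot (IsLocalRing.maximalIdeal R) ⊤
        (Module.finite_def.mp inferInstance) (le_of_eq heq.symm)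
        (IsLocalRing.maximalIdeal_le_jacobson ⊥)
    refine subsingleton_of_forall_eq 0 (fun x => ?_)
    have : x ∈ (⊤ : Submodule R M) := Submodule.mem_top
    rw [hbot] at this
    simpa using this
  · intro h
    refine subsingleton_of_forall_eq 0 (fun x => ?_)
    obtain ⟨y, rfl⟩ := Submodule.Quotient.mk_surjective
      (IsLocalRing.maximalIdeal R • (⊤ : Submodule R M)) x
    have : y = 0 := Subsingleton.elim _ _
    rw [this]
    rfl

end MainProof

open ContractionHelper HomologicalComplex in
theorem statement_4 (R : Type) [CommRing R] [IsNoetherianRing R] [IsLocalRing R]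
    (C F : CochainComplex (ModuleCat R) ℤ) (hC : IsGoodComplex R C)
    (hF : IsMinimalComplex R F) (f : F ⟶ C) (hf : QuasiIso f) (i : ℤ) :
    Nonempty ((↥((qMod R (IsLocalRing.maximalIdeal R)).obj (F.X i))) ≃ₗ[R]
        ↥(((qCx R (IsLocalRing.maximalIdeal R)).obj C).homology i)) ∧
    (¬ Limits.IsZero (F.X i) ↔
      ¬ Limits.IsZero (((qCx R (IsLocalRing.maximalIdeal R)).obj C).homology i)) := by
  classical
  obtain ⟨aF, bF, hFb⟩ := hF.1.1
  obtain ⟨aC, bC, hCb⟩ := hC.1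
  set b : ℤ := max bF bC with hbdef
  have hb : ∀ n : ℤ, b < n → Limits.IsZero ((CochainComplex.mappingCone f).X n) := by
    intro n hn
    have h1 : Limits.IsZero (F.X (n+1)) := hFb _ (Or.inr (by omega))
    have h2 : Limits.IsZero (C.X n) := hCb _ (Or.inr (by omega))
    have e := HomologicalComplex.homotopyCofiber.XIsoBiprod f n (n+1)
      (show (ComplexShape.up ℤ).Rel n (n+1) by simp)
    exact Limits.IsZero.of_iso ((Limits.biprod_isZero_iff _ _).mpr ⟨h1, h2⟩) e
  have hproj : ∀ n : ℤ, Module.Projective R ((CochainComplex.mappingCone f).X n) := by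
    intro n
    have e := HomologicalComplex.homotopyCofiber.XIsoBiprod f n (n+1)
      (show (ComplexShape.up ℤ).Rel n (n+1) by simp)
    have e2 := e ≪≫ ModuleCat.biprodIsoProd (F.X (n+1)) (C.X n)
    haveI := hF.1.2.2 (n+1)
    haveI := hC.2.2 n
    haveI : Module.Projective R (↥(ModuleCat.of R (↑(F.X (n+1)) × ↑(C.X n)))) :=
      (inferInstance : Module.Projective R (↑(F.X (n+1)) × ↑(C.X n)))
    exact Module.Projective.of_equiv e2.toLinearEquiv.symm
  -- the homotopy equivalence F ≃ C
  have e : HomotopyEquiv F C := homotopyEquivOfQuasiIso f b hb hproj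
  -- reduce modulo the maximal ideal
  set I := IsLocalRing.maximalIdeal R with hI
  have e2 : HomotopyEquiv ((qCx R I).obj F) ((qCx R I).obj C) :=
    (qMod R I).mapHomotopyEquiv e
  haveI hq : QuasiIso e2.hom := inferInstance
  haveI : IsIso (HomologicalComplex.homologyMap e2.hom i) := by
    have := hq.quasiIsoAt i
    rwa [quasiIsoAt_iff_isIso_homologyMap] at this
  have iso1 : ((qCx R I).obj F).homology i ≅ ((qCx R I).obj C).homology i :=
    asIso (HomologicalComplex.homologyMap e2.hom i)
  -- homology of the reduced minimal complex is the reduced module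
  have hf1 : (((qCx R I).obj F).sc i).f = 0 := hF.2 _ _
  have hg1 : (((qCx R I).obj F).sc i).g = 0 := hF.2 _ _
  have iso2 : ((qCx R I).obj F).homology i ≅ (qMod R I).obj (F.X i) :=
    (ShortComplex.HomologyData.ofZeros (((qCx R I).obj F).sc i) hf1 hg1).left.homologyIso
  have e3 : (qMod R I).obj (F.X i) ≅ ((qCx R I).obj C).homology i := iso2.symm ≪≫ iso1
  constructor
  · exact ⟨e3.toLinearEquiv⟩
  · haveI := hF.1.2.1 i
    rw [not_iff_not, ← isZero_qMod_iff (F.X i), e3.isZero_iff]
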